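/- Let L be a p-adic local field and g a finite-dimensional L-Lie algebra with basis x_1,...,x_d having integral structure constants. Fix r > 1 and the norm ||·||_r on U(g). If c_{αβ,γ} ∈ L are defined by X^α X^β = Σ_γ c_{αβ,γ} X^γ (expansion of a product of PBW monomials in the PBW basis), then |c_{αβ,γ}| ≤ r^{|α|+|β|-|γ|} for all multi-indices α, β, γ. -/

import Mathlib

open scoped NNReal

/-- The PBW-norm `‖Σ_α d_α X^α‖_r = sup_α ‖d_α‖ r^{|α|}` on the universal enveloping
algebra, expressed via a PBW basis `b` indexed by multi-indices `α : Fin d →₀ ℕ`. -/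
noncomputable def pbwNorm {L : Type*} [NontriviallyNormedField L] {𝔤 : Type*}
    [LieRing 𝔤] [LieAlgebra L 𝔤] {d : ℕ}
    (b : Module.Basis (Fin d →₀ ℕ) L (UniversalEnvelopingAlgebra L 𝔤)) (r : ℝ≥0)
    (u : UniversalEnvelopingAlgebra L 𝔤) : ℝ≥0 :=
  (b.repr u).support.sup fun α => ‖b.repr u α‖₊ * r ^ (α.sum fun _ n => n)

section Aux

open UniversalEnvelopingAlgebra

attribute [local instance] LieRing.ofAssociativeRing

/-- Total degree of a multi-index. -/
def pbwDeg {d : ℕ} (γ : Fin d →₀ ℕ) : ℕ := γ.sum fun _ n => n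

lemma pbwDeg_add {d : ℕ} (γ δ : Fin d →₀ ℕ) : pbwDeg (γ + δ) = pbwDeg γ + pbwDeg δ :=
  Finsupp.sum_add_index' (fun _ => rfl) (fun _ _ _ => rfl)

lemma pbwDeg_single {d : ℕ} (i : Fin d) : pbwDeg (Finsupp.single i 1) = 1 := by
  simp [pbwDeg]

lemma pbwDeg_eq_sum {d : ℕ} (γ : Fin d →₀ ℕ) : pbwDeg γ = ∑ i : Fin d, γ i :=
  Finsupp.sum_fintype _ _ (fun _ => rfl)

variable {L : Type*} [NontriviallyNormedField L]
  {𝔤 : Type*} [LieRing 𝔤] [LieAlgebra L 𝔤] {d : ℕ}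
  (b : Module.Basis (Fin d →₀ ℕ) L (UniversalEnvelopingAlgebra L 𝔤)) (r : ℝ≥0)

/-- The "lattice at level `n`": elements all of whose PBW coefficients `c_δ` satisfy
`‖c_δ‖ r^{|δ|} ≤ r^n`, and whose coefficients vanish in degrees above `n`. -/
def pbwS (n : ℕ) (u : UniversalEnvelopingAlgebra L 𝔤) : Prop :=
  ∀ δ : Fin d →₀ ℕ, ‖b.repr u δ‖₊ * r ^ pbwDeg δ ≤ r ^ n ∧ (n < pbwDeg δ → b.repr u δ = 0)

lemma pbwS_zero (n : ℕ) : pbwS b r n 0 := by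
  intro δ; simp

lemma pbwS_add [IsUltrametricDist L] {n : ℕ} {u v : UniversalEnvelopingAlgebra L 𝔤}
    (hu : pbwS b r n u) (hv : pbwS b r n v) : pbwS b r n (u + v) := by
  intro δ
  refine ⟨?_, fun h => by rw [map_add, Finsupp.add_apply, (hu δ).2 h, (hv δ).2 h, add_zero]⟩
  have h1 : ‖b.repr (u + v) δ‖₊ ≤ max ‖b.repr u δ‖₊ ‖b.repr v δ‖₊ := by
    rw [map_add, Finsupp.add_apply]
    exact IsUltrametricDist.nnnorm_add_le_max _ _
  refine (mul_le_mul_left h1 _).trans ?_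
  rcases le_total ‖b.repr u δ‖₊ ‖b.repr v δ‖₊ with h | h
  · rw [max_eq_right h]; exact (hv δ).1
  · rw [max_eq_left h]; exact (hu δ).1

lemma pbwS_sum [IsUltrametricDist L] {n : ℕ} {ι : Type*} {s : Finset ι}
    {f : ι → UniversalEnvelopingAlgebra L 𝔤} (h : ∀ x ∈ s, pbwS b r n (f x)) :
    pbwS b r n (∑ x ∈ s, f x) :=
  Finset.sum_induction f (pbwS b r n) (fun _ _ => pbwS_add b r) (pbwS_zero b r n) h

lemma pbwS_mono (hr : 1 ≤ r) {n m : ℕ} (h : n ≤ m) {u : UniversalEnvelopingAlgebra L 𝔤}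
    (hu : pbwS b r n u) : pbwS b r m u := fun δ =>
  ⟨(hu δ).1.trans (pow_le_pow_right₀ hr h), fun hlt => (hu δ).2 (h.trans_lt hlt)⟩

lemma pbwS_smul {n k : ℕ} (hkn : k ≤ n) {c : L} (hc : ‖c‖₊ * r ^ k ≤ r ^ n)
    {u : UniversalEnvelopingAlgebra L 𝔤} (hu : pbwS b r k u) : pbwS b r n (c • u) := by
  intro δ
  have h1 : b.repr (c • u) δ = c * b.repr u δ := by
    rw [map_smul, Finsupp.smul_apply, smul_eq_mul]
  constructor
  · rw [h1, nnnorm_mul, mul_assoc]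
    exact (mul_le_mul_right (hu δ).1 _).trans hc
  · intro h; rw [h1, (hu δ).2 (hkn.trans_lt h), mul_zero]

lemma pbwS_basis (hr : 1 ≤ r) {n : ℕ} {γ : Fin d →₀ ℕ} (hγ : pbwDeg γ ≤ n) :
    pbwS b r n (b γ) := by
  intro δ
  rw [Module.Basis.repr_self]
  by_cases hδ : δ = γ
  · subst hδ
    rw [Finsupp.single_eq_same]
    exact ⟨by simpa using pow_le_pow_right₀ hr hγ, fun h => absurd hγ (by omega)⟩
  · rw [Finsupp.single_eq_of_ne' (Ne.symm hδ)]
    simp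

/-- Merging a generator into a sorted monomial when all smaller exponents vanish. -/
lemma pbw_list_merge {M : Type*} [Monoid M] (x : Fin d → M) (i : Fin d)
    (l : List (Fin d)) (hsort : l.Pairwise (· < ·)) (hmem : i ∈ l)
    (γ : Fin d →₀ ℕ) (hz : ∀ j, j < i → γ j = 0) :
    x i * (l.map fun j => x j ^ γ j).prod
      = (l.map fun j => x j ^ ((γ + Finsupp.single i 1 : Fin d →₀ ℕ) j)).prod := by
  induction l with
  | nil => simp at hmem
  | cons j t IH =>
    rw [List.pairwise_cons] at hsort
    obtain ⟨hjt, hsort'⟩ := hsort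
    rcases List.mem_cons.mp hmem with rfl | hit
    · simp only [List.map_cons, List.prod_cons]
      have h1 : ((γ + Finsupp.single i 1 : Fin d →₀ ℕ) i) = γ i + 1 := by
        rw [Finsupp.add_apply, Finsupp.single_eq_same]
      have h2 : (t.map fun k => x k ^ ((γ + Finsupp.single i 1 : Fin d →₀ ℕ) k))
          = t.map fun k => x k ^ γ k := by
        refine List.map_congr_left fun k hk => ?_
        rw [Finsupp.add_apply, Finsupp.single_eq_of_ne' (ne_of_lt (hjt k hk)), add_zero]
      rw [h1, h2, ← mul_assoc, ← pow_succ']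
    · have hji : j < i := hjt i hit
      have hγj : γ j = 0 := hz j hji
      have hγj' : (γ + Finsupp.single i 1 : Fin d →₀ ℕ) j = 0 := by
        rw [Finsupp.add_apply, Finsupp.single_eq_of_ne' (ne_of_gt hji), hγj, add_zero]
      simp only [List.map_cons, List.prod_cons, hγj, hγj', pow_zero, one_mul]
      exact IH hsort' hit

variable (bg : Module.Basis (Fin d) L 𝔤)

lemma pbw_gen_mul_basis
    (hb : ∀ α : Fin d →₀ ℕ,
      b α = ((List.finRange d).map fun i =>
        (UniversalEnvelopingAlgebra.ι L (bg i) : UniversalEnvelopingAlgebra L 𝔤) ^ α i).prod)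
    (i : Fin d) (γ : Fin d →₀ ℕ) (hz : ∀ l, l < i → γ l = 0) :
    (ι L (bg i) : UniversalEnvelopingAlgebra L 𝔤) * b γ = b (γ + Finsupp.single i 1) := by
  rw [hb, hb]
  exact pbw_list_merge (fun j => (ι L (bg j) : UniversalEnvelopingAlgebra L 𝔤)) i
    (List.finRange d) (List.pairwise_lt_finRange d) (List.mem_finRange i) γ hz

lemma pbw_mul_decomp [IsUltrametricDist L] {n : ℕ} {v w : UniversalEnvelopingAlgebra L 𝔤}
    (hv : pbwS b r n v)
    (hK : ∀ δ : Fin d →₀ ℕ, pbwDeg δ ≤ n → pbwS b r (pbwDeg δ + 1) (w * b δ)) :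
    pbwS b r (n + 1) (w * v) := by
  have hv' : v = ∑ δ ∈ (b.repr v).support, b.repr v δ • b δ := by
    conv_lhs => rw [← b.linearCombination_repr v]
    rw [Finsupp.linearCombination_apply, Finsupp.sum]
  rw [hv', Finset.mul_sum]
  apply pbwS_sum
  intro δ hδ
  rw [mul_smul_comm]
  have hdeg : pbwDeg δ ≤ n := by
    by_contra h
    push_neg at h
    exact Finsupp.mem_support_iff.mp hδ ((hv δ).2 h)
  refine pbwS_smul b r (Nat.succ_le_succ hdeg) ?_ (hK δ hdeg)
  rw [pow_succ, pow_succ, ← mul_assoc]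
  exact mul_le_mul_left (hv δ).1 r

/-- The key induction: multiplying a PBW monomial by a generator raises the level by at
most one. -/
lemma pbw_key [IsUltrametricDist L] (hr : 1 < r)
    (hint : ∀ i j k, ‖bg.repr ⁅bg i, bg j⁆ k‖ ≤ 1)
    (hb : ∀ α : Fin d →₀ ℕ,
      b α = ((List.finRange d).map fun i =>
        (UniversalEnvelopingAlgebra.ι L (bg i) : UniversalEnvelopingAlgebra L 𝔤) ^ α i).prod) :
    ∀ m : ℕ, ∀ (i : Fin d) (γ : Fin d →₀ ℕ), d * pbwDeg γ + i < m →
      pbwS b r (pbwDeg γ + 1) ((ι L (bg i) : UniversalEnvelopingAlgebra L 𝔤) * b γ) := by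
  intro m
  induction m with
  | zero => exact fun i γ h => absurd h (Nat.not_lt_zero _)
  | succ m IH =>
    intro i γ hm
    by_cases hz : ∀ l, l < i → γ l = 0
    · rw [pbw_gen_mul_basis b bg hb i γ hz]
      exact pbwS_basis b r hr.le (by rw [pbwDeg_add, pbwDeg_single])
    · push_neg at hz
      obtain ⟨l₀, hl₀i, hl₀⟩ := hz
      have hTne : (Finset.univ.filter (fun l => l < i ∧ γ l ≠ 0)).Nonempty :=
        ⟨l₀, by simp [hl₀i, hl₀]⟩
      obtain ⟨j, hjmem, hjmin⟩ :
          ∃ j ∈ Finset.univ.filter (fun l => l < i ∧ γ l ≠ 0),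
            ∀ l ∈ Finset.univ.filter (fun l => l < i ∧ γ l ≠ 0), j ≤ l :=
        ⟨_, Finset.min'_mem _ hTne, fun l hl => Finset.min'_le _ l hl⟩
      rw [Finset.mem_filter] at hjmem
      obtain ⟨-, hji, hγj⟩ := hjmem
      have hmin : ∀ l, l < j → γ l = 0 := by
        intro l hl
        by_contra h
        have hlT : l ∈ Finset.univ.filter (fun l => l < i ∧ γ l ≠ 0) := by
          rw [Finset.mem_filter]
          exact ⟨Finset.mem_univ _, hl.trans hji, h⟩
        exact absurd (hjmin l hlT) (not_le.mpr hl)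
      set γ' := γ - Finsupp.single j 1 with hγ'def
      have hγγ' : γ' + Finsupp.single j 1 = γ := by
        ext l
        rw [Finsupp.add_apply, hγ'def, Finsupp.tsub_apply]
        by_cases h : l = j
        · subst h
          rw [Finsupp.single_eq_same]
          omega
        · rw [Finsupp.single_eq_of_ne' (Ne.symm h)]
          omega
      have hdeg' : pbwDeg γ = pbwDeg γ' + 1 := by
        rw [← hγγ', pbwDeg_add, pbwDeg_single]
      have hminγ' : ∀ l, l < j → γ' l = 0 := fun l hl => by
        rw [hγ'def, Finsupp.tsub_apply, hmin l hl]
        exact Nat.zero_sub _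
      have hbsplit : b γ = (ι L (bg j) : UniversalEnvelopingAlgebra L 𝔤) * b γ' := by
        rw [pbw_gen_mul_basis b bg hb j γ' hminγ', hγγ']
      have hbr : ((ι L ⁅bg i, bg j⁆ : UniversalEnvelopingAlgebra L 𝔤))
          = ∑ k : Fin d, bg.repr ⁅bg i, bg j⁆ k • (ι L (bg k) : UniversalEnvelopingAlgebra L 𝔤) := by
        conv_lhs => rw [← Module.Basis.sum_repr bg ⁅bg i, bg j⁆]
        rw [← LieHom.coe_toLinearMap, map_sum]
        exact Finset.sum_congr rfl fun k _ => by rw [map_smul, LieHom.coe_toLinearMap]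
      have hcomm : (ι L (bg i) : UniversalEnvelopingAlgebra L 𝔤) * ι L (bg j)
          = ι L (bg j) * ι L (bg i) + ι L ⁅bg i, bg j⁆ := by
        have h2 : (ι L ⁅bg i, bg j⁆ : UniversalEnvelopingAlgebra L 𝔤)
            = ι L (bg i) * ι L (bg j) - ι L (bg j) * ι L (bg i) := by
          rw [LieHom.map_lie, Ring.lie_def]
        rw [h2]
        noncomm_ring
      have heq : (ι L (bg i) : UniversalEnvelopingAlgebra L 𝔤) * b γ
          = ι L (bg j) * (ι L (bg i) * b γ')
            + ∑ k : Fin d, bg.repr ⁅bg i, bg j⁆ k •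
                ((ι L (bg k) : UniversalEnvelopingAlgebra L 𝔤) * b γ') := by
        rw [hbsplit, ← mul_assoc, hcomm, add_mul, mul_assoc, hbr, Finset.sum_mul]
        congr 1
        exact Finset.sum_congr rfl fun k _ => smul_mul_assoc _ _ _
      have hd : (i : ℕ) < d := i.isLt
      have hmul : d * pbwDeg γ' + d = d * pbwDeg γ := by
        rw [hdeg', Nat.mul_succ]
      rw [heq, hdeg']
      apply pbwS_add
      · -- first term
        have hK : ∀ δ : Fin d →₀ ℕ, pbwDeg δ ≤ pbwDeg γ' + 1 →
            pbwS b r (pbwDeg δ + 1) ((ι L (bg j) : UniversalEnvelopingAlgebra L 𝔤) * b δ) := by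
          intro δ hδ
          apply IH j δ
          have h1 : d * pbwDeg δ ≤ d * pbwDeg γ := by
            apply Nat.mul_le_mul_left
            omega
          have h2 : (j : ℕ) < (i : ℕ) := hji
          omega
        have hv : pbwS b r (pbwDeg γ' + 1)
            ((ι L (bg i) : UniversalEnvelopingAlgebra L 𝔤) * b γ') := by
          apply IH i γ'
          omega
        exact pbw_mul_decomp b r hv hK
      · apply pbwS_sum
        intro k _
        have hk : pbwS b r (pbwDeg γ' + 1)
            ((ι L (bg k) : UniversalEnvelopingAlgebra L 𝔤) * b γ') := by
          apply IH k γ'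
          have hkd : (k : ℕ) < d := k.isLt
          omega
        apply pbwS_mono b r hr.le (Nat.le_succ _)
        apply pbwS_smul b r le_rfl ?_ hk
        have hc1 : ‖bg.repr ⁅bg i, bg j⁆ k‖₊ ≤ 1 := hint i j k
        calc ‖bg.repr ⁅bg i, bg j⁆ k‖₊ * r ^ (pbwDeg γ' + 1)
            ≤ 1 * r ^ (pbwDeg γ' + 1) := mul_le_mul_left hc1 _
          _ = r ^ (pbwDeg γ' + 1) := one_mul _

lemma pbw_gen_mul [IsUltrametricDist L] (hr : 1 < r)
    (hint : ∀ i j k, ‖bg.repr ⁅bg i, bg j⁆ k‖ ≤ 1)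
    (hb : ∀ α : Fin d →₀ ℕ,
      b α = ((List.finRange d).map fun i =>
        (UniversalEnvelopingAlgebra.ι L (bg i) : UniversalEnvelopingAlgebra L 𝔤) ^ α i).prod)
    (j : Fin d) {n : ℕ} {v : UniversalEnvelopingAlgebra L 𝔤} (hv : pbwS b r n v) :
    pbwS b r (n + 1) ((ι L (bg j) : UniversalEnvelopingAlgebra L 𝔤) * v) :=
  pbw_mul_decomp b r hv fun δ _ =>
    pbw_key b r bg hr hint hb (d * pbwDeg δ + j + 1) j δ (Nat.lt_succ_self _)

lemma pbw_list_mul [IsUltrametricDist L] (hr : 1 < r)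
    (hint : ∀ i j k, ‖bg.repr ⁅bg i, bg j⁆ k‖ ≤ 1)
    (hb : ∀ α : Fin d →₀ ℕ,
      b α = ((List.finRange d).map fun i =>
        (UniversalEnvelopingAlgebra.ι L (bg i) : UniversalEnvelopingAlgebra L 𝔤) ^ α i).prod)
    (l : List (Fin d)) {n : ℕ} {v : UniversalEnvelopingAlgebra L 𝔤} (hv : pbwS b r n v) :
    pbwS b r (n + l.length)
      (((l.map fun j => (ι L (bg j) : UniversalEnvelopingAlgebra L 𝔤)).prod) * v) := by
  induction l with
  | nil => simpa using hv
  | cons j t IH =>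
    simp only [List.map_cons, List.prod_cons, List.length_cons, mul_assoc]
    have := pbw_gen_mul b r bg hr hint hb j IH
    rwa [Nat.add_succ]

end Aux

/-- if `c_{αβ,γ}` are the coefficients of the expansion of a product of two PBW
monomials, `X^α X^β = Σ_γ c_{αβ,γ} X^γ`, then `|c_{αβ,γ}| ≤ r^{|α|+|β|}/r^{|γ|}` for every
`r > 1`. -/
theorem pbw_structure_coeff_bound {p : ℕ} [Fact (Nat.Prime p)]
    (L : Type*) [NontriviallyNormedField L] [NormedAlgebra ℚ_[p] L]
    [FiniteDimensional ℚ_[p] L] [IsUltrametricDist L]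
    (𝔤 : Type*) [LieRing 𝔤] [LieAlgebra L 𝔤] {d : ℕ}
    (bg : Module.Basis (Fin d) L 𝔤)
    (hint : ∀ i j k, ‖bg.repr ⁅bg i, bg j⁆ k‖ ≤ 1)
    (b : Module.Basis (Fin d →₀ ℕ) L (UniversalEnvelopingAlgebra L 𝔤))
    (hb : ∀ α : Fin d →₀ ℕ,
      b α = ((List.finRange d).map fun i =>
        (UniversalEnvelopingAlgebra.ι L (bg i) : UniversalEnvelopingAlgebra L 𝔤) ^ α i).prod)
    (r : ℝ≥0) (hr : 1 < r) (α β γ : Fin d →₀ ℕ) :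
    ‖b.repr (b α * b β) γ‖₊ ≤
      r ^ ((α.sum fun _ n => n) + (β.sum fun _ n => n)) / r ^ (γ.sum fun _ n => n) := by
  classical
  set lα : List (Fin d) := (List.finRange d).flatMap fun i => List.replicate (α i) i with hlα
  have hprod : ((lα.map fun j =>
      (UniversalEnvelopingAlgebra.ι L (bg j) : UniversalEnvelopingAlgebra L 𝔤)).prod) = b α := by
    rw [hb, hlα, List.map_flatMap]
    simp only [List.map_replicate]
    rw [List.flatMap, List.prod_flatten, List.map_map]
    exact congrArg List.prod (List.map_congr_left fun i _ => List.prod_replicate _ _)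
  have hlen : lα.length = pbwDeg α := by
    rw [hlα, List.length_flatMap, pbwDeg_eq_sum, Fin.sum_univ_def]
    congr 1
    exact List.map_congr_left fun i _ => List.length_replicate
  have hβ : pbwS b r (pbwDeg β) (b β) := pbwS_basis b r hr.le le_rfl
  have hmem : pbwS b r (pbwDeg β + pbwDeg α) (b α * b β) := by
    have := pbw_list_mul b r bg hr hint hb lα hβ
    rwa [hprod, hlen] at this
  have hmem' : pbwS b r (pbwDeg α + pbwDeg β) (b α * b β) := by
    rwa [Nat.add_comm] at hmem
  have hkey := (hmem' γ).1
  rw [le_div_iff₀ (pow_pos (lt_trans zero_lt_one hr) _)]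
  exact hkey
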